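/- The antipode S of the Connes–Moscovici algebra is an involution: S ∘ S = id_H on H = A ⊗ Q ⊗ A; in particular S is bijective, as required of the antipode of a Hopf algebroid. -/

import Mathlib

open TensorProduct

noncomputable section

/-- `(id ⊗ Δ) ∘ Δ : Q → Q ⊗ (Q ⊗ Q)`, producing the Sweedler legs
`q₍₁₎ ⊗ q₍₂₎ ⊗ q₍₃₎` of the iterated coproduct. -/
def comul2 (Q : Type*) [Ring Q] [HopfAlgebra ℂ Q] :
    Q →ₗ[ℂ] Q ⊗[ℂ] (Q ⊗[ℂ] Q) :=
  (LinearMap.lTensor Q (Coalgebra.comul (R := ℂ))).comp (Coalgebra.comul (R := ℂ))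

/-- The right-hand side `Σ a (q₍₁₎·a') ⊗ q₍₂₎ q' ⊗ (q₍₃₎·b') b` of the
Connes–Moscovici product formula on `H = A ⊗ Q ⊗ A`. -/
def cmMulRHS {Q A : Type*} [Ring Q] [HopfAlgebra ℂ Q] [Ring A] [Algebra ℂ A]
    (act : Q →ₗ[ℂ] A →ₗ[ℂ] A) (a : A) (q : Q) (b : A) (a' : A) (q' : Q) (b' : A) :
    A ⊗[ℂ] (Q ⊗[ℂ] A) :=
  TensorProduct.map ((LinearMap.mulLeft ℂ a).comp (act.flip a'))
    (TensorProduct.map (LinearMap.mulRight ℂ q')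
      ((LinearMap.mulRight ℂ b).comp (act.flip b')))
    (comul2 Q q)

/-- The order-reversing map `A ⊗ (Q ⊗ A) → A ⊗ (Q ⊗ A)`, `x ⊗ y ⊗ z ↦ z ⊗ y ⊗ x`. -/
def cmRev {Q A : Type*} [Ring Q] [HopfAlgebra ℂ Q] [Ring A] [Algebra ℂ A] :
    (A ⊗[ℂ] (Q ⊗[ℂ] A)) →ₗ[ℂ] (A ⊗[ℂ] (Q ⊗[ℂ] A)) :=
  (TensorProduct.congr (LinearEquiv.refl ℂ A) (TensorProduct.comm ℂ Q A) ≪≫ₗ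
    (TensorProduct.assoc ℂ A A Q).symm ≪≫ₗ
    TensorProduct.congr (TensorProduct.comm ℂ A A) (LinearEquiv.refl ℂ Q) ≪≫ₗ
    TensorProduct.assoc ℂ A A Q ≪≫ₗ
    TensorProduct.congr (LinearEquiv.refl ℂ A) (TensorProduct.comm ℂ A Q)).toLinearMap

/-- The value `Σ T(q₍₃₎)·b ⊗ T(q₍₂₎) ⊗ T(q₍₁₎)·a` of the antipode of the
Connes–Moscovici algebra on an elementary tensor `a ⊗ q ⊗ b`. -/
def cmAntipodeRHS {Q A : Type*} [Ring Q] [HopfAlgebra ℂ Q] [Ring A] [Algebra ℂ A]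
    (act : Q →ₗ[ℂ] A →ₗ[ℂ] A) (a : A) (q : Q) (b : A) :
    A ⊗[ℂ] (Q ⊗[ℂ] A) :=
  cmRev
    (TensorProduct.map ((act.flip a).comp (HopfAlgebra.antipode (R := ℂ)))
      (TensorProduct.map (HopfAlgebra.antipode (R := ℂ))
        ((act.flip b).comp (HopfAlgebra.antipode (R := ℂ))))
      (comul2 Q q))


section Helpers

open Coalgebra HopfAlgebra

variable {Q : Type*} [Ring Q] [HopfAlgebra ℂ Q]

local notation "𝒯" => HopfAlgebra.antipode (R := ℂ)
local notation "𝜀" => Coalgebra.counit (R := ℂ)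
local notation "𝛥" => Coalgebra.comul (R := ℂ)

lemma sum_counit_smul_right {q : Q} (r : Repr ℂ q (Q × Q)) :
    ∑ i ∈ r.index, 𝜀 (r.left i) • r.right i = q := by
  have h2 := congrArg (TensorProduct.lid ℂ Q) (Coalgebra.sum_counit_tmul_eq (R := ℂ) r)
  rw [map_sum] at h2
  simp only [TensorProduct.lid_tmul, one_smul] at h2
  exact h2

lemma sum_counit_smul_left {q : Q} (r : Repr ℂ q (Q × Q)) :
    ∑ i ∈ r.index, 𝜀 (r.right i) • r.left i = q := by
  have h2 := congrArg (TensorProduct.rid ℂ Q) (Coalgebra.sum_tmul_counit_eq (R := ℂ) r)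
  rw [map_sum] at h2
  simp only [TensorProduct.rid_tmul, one_smul] at h2
  exact h2


lemma counit_antipode' (q : Q) : (𝜀 (𝒯 q) : ℂ) = 𝜀 q := by
  have r := ℛ ℂ q
  have h := congrArg (Coalgebra.counit (R := ℂ)) (sum_antipode_mul_eq_algebraMap_counit (R := ℂ) r)
  rw [map_sum] at h
  simp only [Bialgebra.counit_mul, Bialgebra.counit_algebraMap] at h
  calc (𝜀 (𝒯 q) : ℂ)
      = 𝜀 (𝒯 (∑ i ∈ r.index, 𝜀 (r.right i) • r.left i)) := by rw [sum_counit_smul_left]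
    _ = ∑ i ∈ r.index, 𝜀 (𝒯 (r.left i)) * 𝜀 (r.right i) := by
        rw [map_sum, map_sum]
        exact Finset.sum_congr rfl fun i _ => by
          rw [map_smul, map_smul, smul_eq_mul, mul_comm]
    _ = 𝜀 q := h

lemma conv_unique {B : Type*} [Ring B] [Algebra ℂ B] (f g h : Q →ₗ[ℂ] B)
    (hfg : ∀ (p : Q), ∑ i ∈ (ℛ ℂ p).index, f ((ℛ ℂ p).left i) * g ((ℛ ℂ p).right i)
      = algebraMap ℂ B (Coalgebra.counit (R := ℂ) p))
    (hgh : ∀ (p : Q), ∑ i ∈ (ℛ ℂ p).index, g ((ℛ ℂ p).left i) * h ((ℛ ℂ p).right i)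
      = algebraMap ℂ B (Coalgebra.counit (R := ℂ) p))
    (q : Q) : f q = h q := by
  set r := ℛ ℂ q with hr
  have key := Coalgebra.sum_tmul_tmul_eq (R := ℂ) r (fun i => ℛ ℂ (r.left i))
    (fun i => ℛ ℂ (r.right i))
  set Ψ : Q ⊗[ℂ] (Q ⊗[ℂ] Q) →ₗ[ℂ] B :=
    LinearMap.mul' ℂ B ∘ₗ (LinearMap.mul' ℂ B).lTensor B ∘ₗ
      TensorProduct.map f (TensorProduct.map g h) with hΨ
  have key2 := congrArg Ψ key
  rw [map_sum, map_sum] at key2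
  simp only [map_sum, hΨ, LinearMap.comp_apply, TensorProduct.map_tmul,
    LinearMap.lTensor_tmul, LinearMap.mul'_apply] at key2
  calc f q = f (∑ i ∈ r.index, Coalgebra.counit (R := ℂ) (r.right i) • r.left i) := by
        rw [sum_counit_smul_left]
    _ = ∑ i ∈ r.index, f (r.left i) * algebraMap ℂ B (Coalgebra.counit (R := ℂ) (r.right i)) := by
        rw [map_sum]
        exact Finset.sum_congr rfl fun i _ => by
          rw [map_smul, Algebra.smul_def, ← Algebra.commutes]
    _ = ∑ i ∈ r.index, f (r.left i) *
          (∑ j ∈ (ℛ ℂ (r.right i)).index, g ((ℛ ℂ (r.right i)).left j) * h ((ℛ ℂ (r.right i)).right j)) := by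
        exact Finset.sum_congr rfl fun i _ => by rw [hgh (r.right i)]
    _ = ∑ i ∈ r.index, ∑ j ∈ (ℛ ℂ (r.right i)).index,
          f (r.left i) * (g ((ℛ ℂ (r.right i)).left j) * h ((ℛ ℂ (r.right i)).right j)) := by
        exact Finset.sum_congr rfl fun i _ => by rw [Finset.mul_sum]
    _ = ∑ i ∈ r.index, ∑ j ∈ (ℛ ℂ (r.left i)).index,
          f ((ℛ ℂ (r.left i)).left j) * (g ((ℛ ℂ (r.left i)).right j) * h (r.right i)) := key2.symm
    _ = ∑ i ∈ r.index, (∑ j ∈ (ℛ ℂ (r.left i)).index,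
          f ((ℛ ℂ (r.left i)).left j) * g ((ℛ ℂ (r.left i)).right j)) * h (r.right i) := by
        exact Finset.sum_congr rfl fun i _ => by rw [Finset.sum_mul]; simp [mul_assoc]
    _ = ∑ i ∈ r.index, algebraMap ℂ B (Coalgebra.counit (R := ℂ) (r.left i)) * h (r.right i) := by
        exact Finset.sum_congr rfl fun i _ => by rw [hfg (r.left i)]
    _ = ∑ i ∈ r.index, Coalgebra.counit (R := ℂ) (r.left i) • h (r.right i) := by
        exact Finset.sum_congr rfl fun i _ => by rw [Algebra.smul_def]
    _ = h q := by
        conv_rhs => rw [← sum_counit_smul_right r]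
        rw [map_sum]
        exact Finset.sum_congr rfl fun i _ => by rw [map_smul]


lemma conv_hgh (p : Q) :
    ∑ j ∈ (ℛ ℂ p).index, (𝛥 ((ℛ ℂ p).left j)) *
        (TensorProduct.map 𝒯 𝒯 (TensorProduct.comm ℂ Q Q (𝛥 ((ℛ ℂ p).right j))))
      = algebraMap ℂ (Q ⊗[ℂ] Q) (𝜀 p) := by
  set rp := ℛ ℂ p with hrp
  -- per-j subcomputation
  have sub : ∀ j ∈ rp.index,
      ∑ k ∈ (ℛ ℂ (rp.right j)).index,
        (rp.left j ⊗ₜ[ℂ] (ℛ ℂ (rp.right j)).left k) *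
          (TensorProduct.map 𝒯 𝒯 (TensorProduct.comm ℂ Q Q (𝛥 ((ℛ ℂ (rp.right j)).right k))))
        = (rp.left j * 𝒯 (rp.right j)) ⊗ₜ[ℂ] (1 : Q) := by
    intro j _
    set v := ℛ ℂ (rp.right j) with hv
    have key3 := Coalgebra.sum_tmul_tmul_eq (R := ℂ) v (fun k => ℛ ℂ (v.left k))
      (fun k => ℛ ℂ (v.right k))
    set Ξ₄ : Q ⊗[ℂ] (Q ⊗[ℂ] Q) →ₗ[ℂ] Q ⊗[ℂ] Q :=
      LinearMap.mul' ℂ (Q ⊗[ℂ] Q) ∘ₗ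
        TensorProduct.map (TensorProduct.mk ℂ Q Q (rp.left j))
          (TensorProduct.map 𝒯 𝒯 ∘ₗ (TensorProduct.comm ℂ Q Q).toLinearMap) with hΞ₄
    have key4 := congrArg Ξ₄ key3
    rw [map_sum, map_sum] at key4
    simp only [map_sum, hΞ₄, LinearMap.comp_apply, TensorProduct.map_tmul,
      TensorProduct.mk_apply, LinearEquiv.coe_coe, TensorProduct.comm_tmul,
      LinearMap.mul'_apply, Algebra.TensorProduct.tmul_mul_tmul] at key4
    calc ∑ k ∈ v.index, (rp.left j ⊗ₜ[ℂ] v.left k) *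
            (TensorProduct.map 𝒯 𝒯 (TensorProduct.comm ℂ Q Q (𝛥 (v.right k))))
        = ∑ k ∈ v.index, ∑ t ∈ (ℛ ℂ (v.right k)).index,
            (rp.left j * 𝒯 ((ℛ ℂ (v.right k)).right t)) ⊗ₜ[ℂ]
              (v.left k * 𝒯 ((ℛ ℂ (v.right k)).left t)) := by
          refine Finset.sum_congr rfl fun k _ => ?_
          rw [← (ℛ ℂ (v.right k)).eq, map_sum, map_sum, Finset.mul_sum]
          exact Finset.sum_congr rfl fun t _ => by
            simp only [TensorProduct.comm_tmul, TensorProduct.map_tmul,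
              Algebra.TensorProduct.tmul_mul_tmul]
      _ = ∑ k ∈ v.index, ∑ t ∈ (ℛ ℂ (v.left k)).index,
            (rp.left j * 𝒯 (v.right k)) ⊗ₜ[ℂ]
              ((ℛ ℂ (v.left k)).left t * 𝒯 ((ℛ ℂ (v.left k)).right t)) := key4.symm
      _ = ∑ k ∈ v.index, 𝜀 (v.left k) • ((rp.left j * 𝒯 (v.right k)) ⊗ₜ[ℂ] (1 : Q)) := by
          refine Finset.sum_congr rfl fun k _ => ?_
          rw [← TensorProduct.tmul_sum, sum_mul_antipode_eq_algebraMap_counit (ℛ ℂ (v.left k)),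
            Algebra.algebraMap_eq_smul_one, TensorProduct.tmul_smul]
      _ = (rp.left j * 𝒯 (rp.right j)) ⊗ₜ[ℂ] (1 : Q) := by
          have : ∀ x : Q, (rp.left j * 𝒯 x) ⊗ₜ[ℂ] (1 : Q)
              = (((TensorProduct.mk ℂ Q Q).flip 1) ∘ₗ LinearMap.mulLeft ℂ (rp.left j) ∘ₗ 𝒯) x := by
            intro x; simp [LinearMap.mulLeft_apply]
          simp only [this, ← map_smul, ← map_sum]
          rw [sum_counit_smul_right v]
  -- main computation
  have key := Coalgebra.sum_tmul_tmul_eq (R := ℂ) rp (fun j => ℛ ℂ (rp.left j))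
    (fun j => ℛ ℂ (rp.right j))
  set ρ : Q →ₗ[ℂ] Q ⊗[ℂ] Q :=
    TensorProduct.map 𝒯 𝒯 ∘ₗ (TensorProduct.comm ℂ Q Q).toLinearMap ∘ₗ Coalgebra.comul with hρ
  set Ξ : Q ⊗[ℂ] (Q ⊗[ℂ] Q) →ₗ[ℂ] Q ⊗[ℂ] Q :=
    LinearMap.mul' ℂ (Q ⊗[ℂ] Q) ∘ₗ ρ.lTensor (Q ⊗[ℂ] Q) ∘ₗ
      (TensorProduct.assoc ℂ Q Q Q).symm.toLinearMap with hΞ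
  have key2 := congrArg Ξ key
  rw [map_sum, map_sum] at key2
  simp only [map_sum, hΞ, LinearMap.comp_apply, LinearEquiv.coe_coe,
    TensorProduct.assoc_symm_tmul, LinearMap.lTensor_tmul, LinearMap.mul'_apply, hρ] at key2
  calc ∑ j ∈ rp.index, (𝛥 (rp.left j)) *
          (TensorProduct.map 𝒯 𝒯 (TensorProduct.comm ℂ Q Q (𝛥 (rp.right j))))
      = ∑ j ∈ rp.index, ∑ k ∈ (ℛ ℂ (rp.left j)).index,
          ((ℛ ℂ (rp.left j)).left k ⊗ₜ[ℂ] (ℛ ℂ (rp.left j)).right k) *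
            (TensorProduct.map 𝒯 𝒯 (TensorProduct.comm ℂ Q Q (𝛥 (rp.right j)))) := by
        refine Finset.sum_congr rfl fun j _ => ?_
        rw [← (ℛ ℂ (rp.left j)).eq, Finset.sum_mul]
    _ = ∑ j ∈ rp.index, ∑ k ∈ (ℛ ℂ (rp.right j)).index,
          (rp.left j ⊗ₜ[ℂ] (ℛ ℂ (rp.right j)).left k) *
            (TensorProduct.map 𝒯 𝒯 (TensorProduct.comm ℂ Q Q (𝛥 ((ℛ ℂ (rp.right j)).right k)))) := key2
    _ = ∑ j ∈ rp.index, (rp.left j * 𝒯 (rp.right j)) ⊗ₜ[ℂ] (1 : Q) :=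
        Finset.sum_congr rfl sub
    _ = (∑ j ∈ rp.index, rp.left j * 𝒯 (rp.right j)) ⊗ₜ[ℂ] (1 : Q) :=
        (TensorProduct.sum_tmul _ _ _).symm
    _ = algebraMap ℂ Q (𝜀 p) ⊗ₜ[ℂ] (1 : Q) := by rw [sum_mul_antipode_eq_algebraMap_counit]
    _ = algebraMap ℂ (Q ⊗[ℂ] Q) (𝜀 p) := by rw [Algebra.TensorProduct.algebraMap_apply]


lemma comul_antipode (q : Q) :
    𝛥 (𝒯 q) = TensorProduct.map 𝒯 𝒯 (TensorProduct.comm ℂ Q Q (𝛥 q)) := by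
  have hfg : ∀ p : Q, ∑ i ∈ (ℛ ℂ p).index,
      (Coalgebra.comul ∘ₗ 𝒯) ((ℛ ℂ p).left i) * Coalgebra.comul ((ℛ ℂ p).right i)
      = algebraMap ℂ (Q ⊗[ℂ] Q) (𝜀 p) := by
    intro p
    simp only [LinearMap.comp_apply]
    calc ∑ i ∈ (ℛ ℂ p).index, 𝛥 (𝒯 ((ℛ ℂ p).left i)) * 𝛥 ((ℛ ℂ p).right i)
        = ∑ i ∈ (ℛ ℂ p).index, 𝛥 (𝒯 ((ℛ ℂ p).left i) * (ℛ ℂ p).right i) :=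
          Finset.sum_congr rfl fun i _ => (Bialgebra.comul_mul _ _).symm
      _ = 𝛥 (∑ i ∈ (ℛ ℂ p).index, 𝒯 ((ℛ ℂ p).left i) * (ℛ ℂ p).right i) := (map_sum _ _ _).symm
      _ = 𝛥 (algebraMap ℂ Q (𝜀 p)) := by rw [sum_antipode_mul_eq_algebraMap_counit]
      _ = algebraMap ℂ (Q ⊗[ℂ] Q) (𝜀 p) := Bialgebra.comul_algebraMap _
  have hgh : ∀ p : Q, ∑ i ∈ (ℛ ℂ p).index,
      Coalgebra.comul ((ℛ ℂ p).left i) *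
        ((TensorProduct.map 𝒯 𝒯 ∘ₗ (TensorProduct.comm ℂ Q Q).toLinearMap ∘ₗ Coalgebra.comul)
          ((ℛ ℂ p).right i))
      = algebraMap ℂ (Q ⊗[ℂ] Q) (𝜀 p) := by
    intro p
    simp only [LinearMap.comp_apply, LinearEquiv.coe_coe]
    exact conv_hgh p
  have h := conv_unique (B := Q ⊗[ℂ] Q)
    (Coalgebra.comul ∘ₗ 𝒯) Coalgebra.comul
    (TensorProduct.map 𝒯 𝒯 ∘ₗ (TensorProduct.comm ℂ Q Q).toLinearMap ∘ₗ Coalgebra.comul)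
    hfg hgh q
  simpa using h

lemma sum_right_mul_antipode_left (hT : ∀ q : Q, 𝒯 (𝒯 q) = q) {w : Q} (rw : Repr ℂ w (Q × Q)) :
    ∑ i ∈ rw.index, rw.right i * 𝒯 (rw.left i) = algebraMap ℂ Q (𝜀 w) := by
  have h := HopfAlgebra.mul_antipode_rTensor_comul_apply (R := ℂ) (a := 𝒯 w)
  rw [comul_antipode, ← rw.eq] at h
  simp only [map_sum, TensorProduct.comm_tmul, TensorProduct.map_tmul,
    LinearMap.rTensor_tmul, LinearMap.mul'_apply, hT, counit_antipode'] at h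
  exact h


end Helpers

section CM

open Coalgebra HopfAlgebra

variable {Q A : Type*} [Ring Q] [HopfAlgebra ℂ Q] [Ring A] [Algebra ℂ A]

local notation "𝒯" => HopfAlgebra.antipode (R := ℂ)
local notation "𝜀" => Coalgebra.counit (R := ℂ)
local notation "𝛥" => Coalgebra.comul (R := ℂ)

lemma cmRev_tmul (x : A) (y : Q) (z : A) :
    (cmRev (x ⊗ₜ[ℂ] (y ⊗ₜ[ℂ] z)) : A ⊗[ℂ] (Q ⊗[ℂ] A)) = z ⊗ₜ[ℂ] (y ⊗ₜ[ℂ] x) := by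
  simp [cmRev]

lemma comul2_repr {q : Q} (r : Repr ℂ q (Q × Q)) :
    comul2 Q q = ∑ i ∈ r.index, ∑ j ∈ (ℛ ℂ (r.right i)).index,
      r.left i ⊗ₜ[ℂ] ((ℛ ℂ (r.right i)).left j ⊗ₜ[ℂ] (ℛ ℂ (r.right i)).right j) := by
  rw [comul2, LinearMap.comp_apply, ← r.eq, map_sum]
  refine Finset.sum_congr rfl fun i _ => ?_
  rw [LinearMap.lTensor_tmul, ← (ℛ ℂ (r.right i)).eq, TensorProduct.tmul_sum]

lemma cmAntipodeRHS_repr (act : Q →ₗ[ℂ] A →ₗ[ℂ] A) (a : A) {q : Q} (b : A) (r : Repr ℂ q (Q × Q)) :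
    cmAntipodeRHS act a q b = ∑ i ∈ r.index, ∑ j ∈ (ℛ ℂ (r.right i)).index,
      act (𝒯 ((ℛ ℂ (r.right i)).right j)) b ⊗ₜ[ℂ]
        (𝒯 ((ℛ ℂ (r.right i)).left j) ⊗ₜ[ℂ] act (𝒯 (r.left i)) a) := by
  rw [cmAntipodeRHS, comul2_repr r]
  simp only [map_sum, TensorProduct.map_tmul, LinearMap.comp_apply, LinearMap.flip_apply,
    cmRev_tmul]

lemma comul2_antipode (p : Q) (rp : Repr ℂ p (Q × Q)) :
    comul2 Q (𝒯 p) = ∑ k ∈ rp.index, ∑ m ∈ (ℛ ℂ (rp.left k)).index,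
      𝒯 (rp.right k) ⊗ₜ[ℂ]
        (𝒯 ((ℛ ℂ (rp.left k)).right m) ⊗ₜ[ℂ] 𝒯 ((ℛ ℂ (rp.left k)).left m)) := by
  rw [comul2, LinearMap.comp_apply, comul_antipode, ← rp.eq]
  simp only [map_sum, TensorProduct.comm_tmul, TensorProduct.map_tmul, LinearMap.lTensor_tmul]
  refine Finset.sum_congr rfl fun k _ => ?_
  rw [comul_antipode, ← (ℛ ℂ (rp.left k)).eq]
  simp only [map_sum, TensorProduct.comm_tmul, TensorProduct.map_tmul, TensorProduct.tmul_sum]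

lemma cmAntipodeRHS_antipode (hT : ∀ q : Q, 𝒯 (𝒯 q) = q) (act : Q →ₗ[ℂ] A →ₗ[ℂ] A)
    (a' : A) (p : Q) (b' : A) (rp : Repr ℂ p (Q × Q)) :
    cmAntipodeRHS act a' (𝒯 p) b' = ∑ k ∈ rp.index, ∑ m ∈ (ℛ ℂ (rp.left k)).index,
      act ((ℛ ℂ (rp.left k)).left m) b' ⊗ₜ[ℂ]
        ((ℛ ℂ (rp.left k)).right m ⊗ₜ[ℂ] act (rp.right k) a') := by
  rw [cmAntipodeRHS, comul2_antipode p rp]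
  simp only [map_sum, TensorProduct.map_tmul, LinearMap.comp_apply, LinearMap.flip_apply,
    hT, cmRev_tmul]

lemma Xi_eval (act : Q →ₗ[ℂ] A →ₗ[ℂ] A) (a b : A) (c x y z : Q) (rx : Repr ℂ x (Q × Q)) :
    (TensorProduct.map ((act.flip a) ∘ₗ LinearMap.mulRight ℂ c)
        (TensorProduct.map LinearMap.id
          ((act.flip b) ∘ₗ LinearMap.mul' ℂ Q ∘ₗ LinearMap.lTensor Q 𝒯)) ∘ₗ
      (TensorProduct.assoc ℂ Q Q (Q ⊗[ℂ] Q)).toLinearMap ∘ₗ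
      LinearMap.rTensor (Q ⊗[ℂ] Q) (Coalgebra.comul (R := ℂ)))
      (x ⊗ₜ[ℂ] (y ⊗ₜ[ℂ] z))
    = ∑ m ∈ rx.index, act (rx.left m * c) a ⊗ₜ[ℂ] (rx.right m ⊗ₜ[ℂ] act (y * 𝒯 z) b) := by
  simp only [LinearMap.comp_apply, LinearMap.rTensor_tmul]
  rw [← rx.eq, TensorProduct.sum_tmul]
  simp only [map_sum, LinearEquiv.coe_coe, TensorProduct.assoc_tmul, TensorProduct.map_tmul,
    LinearMap.comp_apply, LinearMap.mulRight_apply, LinearMap.flip_apply, LinearMap.id_coe,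
    id_eq, LinearMap.lTensor_tmul, LinearMap.mul'_apply]

lemma Phi_eval (act : Q →ₗ[ℂ] A →ₗ[ℂ] A) (a b : A) (c : Q) (w : Q) (rw : Repr ℂ w (Q × Q)) :
    ((TensorProduct.map ((act.flip a) ∘ₗ LinearMap.mulRight ℂ c)
        ((TensorProduct.mk ℂ Q A).flip b)) ∘ₗ (Coalgebra.comul (R := ℂ))) w
    = ∑ n ∈ rw.index, act (rw.left n * c) a ⊗ₜ[ℂ] (rw.right n ⊗ₜ[ℂ] b) := by
  simp only [LinearMap.comp_apply]
  rw [← rw.eq]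
  simp only [map_sum, TensorProduct.map_tmul, LinearMap.comp_apply, LinearMap.mulRight_apply,
    LinearMap.flip_apply, TensorProduct.mk_apply]

lemma Omega_eval (act : Q →ₗ[ℂ] A →ₗ[ℂ] A) (a b : A) (x y z : Q) :
    (TensorProduct.map
        ((act.flip a) ∘ₗ LinearMap.mul' ℂ Q ∘ₗ (TensorProduct.comm ℂ Q Q).toLinearMap ∘ₗ
          LinearMap.rTensor Q 𝒯)
        ((TensorProduct.mk ℂ Q A).flip b) ∘ₗ
      (TensorProduct.assoc ℂ Q Q Q).symm.toLinearMap) (x ⊗ₜ[ℂ] (y ⊗ₜ[ℂ] z))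
    = act (y * 𝒯 x) a ⊗ₜ[ℂ] (z ⊗ₜ[ℂ] b) := by
  simp only [LinearMap.comp_apply, LinearEquiv.coe_coe, TensorProduct.assoc_symm_tmul,
    TensorProduct.map_tmul, LinearMap.rTensor_tmul, TensorProduct.comm_tmul,
    LinearMap.mul'_apply, LinearMap.flip_apply, TensorProduct.mk_apply]

lemma SS_pure (act : Q →ₗ[ℂ] A →ₗ[ℂ] A)
    (hact_one : ∀ a : A, act 1 a = a)
    (hact_mul : ∀ (q q' : Q) (a : A), act (q * q') a = act q (act q' a))
    (hT : ∀ q : Q, 𝒯 (𝒯 q) = q)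
    (S : (A ⊗[ℂ] (Q ⊗[ℂ] A)) →ₗ[ℂ] (A ⊗[ℂ] (Q ⊗[ℂ] A)))
    (hS : ∀ (a : A) (q : Q) (b : A), S (a ⊗ₜ[ℂ] (q ⊗ₜ[ℂ] b)) = cmAntipodeRHS act a q b)
    (a : A) (q : Q) (b : A) :
    S (S (a ⊗ₜ[ℂ] (q ⊗ₜ[ℂ] b))) = a ⊗ₜ[ℂ] (q ⊗ₜ[ℂ] b) := by
  set r := ℛ ℂ q with hr
  -- Step 5 : the inner (per `i`) contraction
  have step5 : ∀ i ∈ r.index,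
      (∑ j ∈ (ℛ ℂ (r.right i)).index, ∑ k ∈ (ℛ ℂ ((ℛ ℂ (r.right i)).left j)).index,
        ∑ m ∈ (ℛ ℂ ((ℛ ℂ ((ℛ ℂ (r.right i)).left j)).left k)).index,
          act ((ℛ ℂ ((ℛ ℂ ((ℛ ℂ (r.right i)).left j)).left k)).left m * 𝒯 (r.left i)) a ⊗ₜ[ℂ]
            ((ℛ ℂ ((ℛ ℂ ((ℛ ℂ (r.right i)).left j)).left k)).right m ⊗ₜ[ℂ]
              act ((ℛ ℂ ((ℛ ℂ (r.right i)).left j)).right k * 𝒯 ((ℛ ℂ (r.right i)).right j)) b))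
      = ∑ n ∈ (ℛ ℂ (r.right i)).index,
          act ((ℛ ℂ (r.right i)).left n * 𝒯 (r.left i)) a ⊗ₜ[ℂ]
            ((ℛ ℂ (r.right i)).right n ⊗ₜ[ℂ] b) := by
    intro i _
    set r2 := ℛ ℂ (r.right i) with hr2
    set c := 𝒯 (r.left i) with hc
    set Ξ : Q ⊗[ℂ] (Q ⊗[ℂ] Q) →ₗ[ℂ] A ⊗[ℂ] (Q ⊗[ℂ] A) :=
      TensorProduct.map ((act.flip a) ∘ₗ LinearMap.mulRight ℂ c)
          (TensorProduct.map LinearMap.id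
            ((act.flip b) ∘ₗ LinearMap.mul' ℂ Q ∘ₗ LinearMap.lTensor Q 𝒯)) ∘ₗ
        (TensorProduct.assoc ℂ Q Q (Q ⊗[ℂ] Q)).toLinearMap ∘ₗ
        LinearMap.rTensor (Q ⊗[ℂ] Q) (Coalgebra.comul (R := ℂ)) with hΞ
    have key := Coalgebra.sum_tmul_tmul_eq (R := ℂ) r2 (fun j => ℛ ℂ (r2.left j))
      (fun j => ℛ ℂ (r2.right j))
    have key2 := congrArg Ξ key
    simp only [map_sum] at key2
    calc (∑ j ∈ r2.index, ∑ k ∈ (ℛ ℂ (r2.left j)).index,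
            ∑ m ∈ (ℛ ℂ ((ℛ ℂ (r2.left j)).left k)).index,
            act ((ℛ ℂ ((ℛ ℂ (r2.left j)).left k)).left m * c) a ⊗ₜ[ℂ]
              ((ℛ ℂ ((ℛ ℂ (r2.left j)).left k)).right m ⊗ₜ[ℂ]
                act ((ℛ ℂ (r2.left j)).right k * 𝒯 (r2.right j)) b))
        = ∑ j ∈ r2.index, ∑ k ∈ (ℛ ℂ (r2.left j)).index,
            Ξ ((ℛ ℂ (r2.left j)).left k ⊗ₜ[ℂ] ((ℛ ℂ (r2.left j)).right k ⊗ₜ[ℂ] r2.right j)) := by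
          refine Finset.sum_congr rfl fun j _ => Finset.sum_congr rfl fun k _ => ?_
          rw [hΞ, Xi_eval act a b c _ _ _ (ℛ ℂ ((ℛ ℂ (r2.left j)).left k))]
      _ = ∑ j ∈ r2.index, ∑ k ∈ (ℛ ℂ (r2.right j)).index,
            Ξ (r2.left j ⊗ₜ[ℂ] ((ℛ ℂ (r2.right j)).left k ⊗ₜ[ℂ] (ℛ ℂ (r2.right j)).right k)) :=
          key2
      _ = ∑ j ∈ r2.index, ∑ k ∈ (ℛ ℂ (r2.right j)).index,
            ∑ n ∈ (ℛ ℂ (r2.left j)).index,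
            act ((ℛ ℂ (r2.left j)).left n * c) a ⊗ₜ[ℂ]
              ((ℛ ℂ (r2.left j)).right n ⊗ₜ[ℂ]
                act ((ℛ ℂ (r2.right j)).left k * 𝒯 ((ℛ ℂ (r2.right j)).right k)) b) := by
          refine Finset.sum_congr rfl fun j _ => Finset.sum_congr rfl fun k _ => ?_
          rw [hΞ, Xi_eval act a b c _ _ _ (ℛ ℂ (r2.left j))]
      _ = ∑ j ∈ r2.index, 𝜀 (r2.right j) •
            ∑ n ∈ (ℛ ℂ (r2.left j)).index,
              act ((ℛ ℂ (r2.left j)).left n * c) a ⊗ₜ[ℂ] ((ℛ ℂ (r2.left j)).right n ⊗ₜ[ℂ] b) := by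
          refine Finset.sum_congr rfl fun j _ => ?_
          rw [Finset.sum_comm, Finset.smul_sum]
          refine Finset.sum_congr rfl fun n _ => ?_
          rw [← TensorProduct.tmul_sum, ← TensorProduct.tmul_sum, ← LinearMap.sum_apply,
            ← map_sum, sum_mul_antipode_eq_algebraMap_counit (ℛ ℂ (r2.right j)), Algebra.algebraMap_eq_smul_one,
            map_smul, LinearMap.smul_apply, hact_one, TensorProduct.tmul_smul,
            TensorProduct.tmul_smul]
      _ = ∑ j ∈ r2.index, 𝜀 (r2.right j) •
            (((TensorProduct.map ((act.flip a) ∘ₗ LinearMap.mulRight ℂ c)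
                ((TensorProduct.mk ℂ Q A).flip b)) ∘ₗ (Coalgebra.comul (R := ℂ)))
              (r2.left j)) := by
          refine Finset.sum_congr rfl fun j _ => ?_
          rw [Phi_eval act a b c _ (ℛ ℂ (r2.left j))]
      _ = ((TensorProduct.map ((act.flip a) ∘ₗ LinearMap.mulRight ℂ c)
              ((TensorProduct.mk ℂ Q A).flip b)) ∘ₗ (Coalgebra.comul (R := ℂ)))
            (r.right i) := by
          simp only [← map_smul, ← map_sum]
          rw [sum_counit_smul_left r2]
      _ = ∑ n ∈ r2.index, act (r2.left n * c) a ⊗ₜ[ℂ] (r2.right n ⊗ₜ[ℂ] b) :=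
          Phi_eval act a b c _ r2
  -- Step 6 : the outer contraction
  set Ω : Q ⊗[ℂ] (Q ⊗[ℂ] Q) →ₗ[ℂ] A ⊗[ℂ] (Q ⊗[ℂ] A) :=
    TensorProduct.map
        ((act.flip a) ∘ₗ LinearMap.mul' ℂ Q ∘ₗ (TensorProduct.comm ℂ Q Q).toLinearMap ∘ₗ
          LinearMap.rTensor Q 𝒯)
        ((TensorProduct.mk ℂ Q A).flip b) ∘ₗ
      (TensorProduct.assoc ℂ Q Q Q).symm.toLinearMap with hΩ
  have key6 := Coalgebra.sum_tmul_tmul_eq (R := ℂ) r (fun i => ℛ ℂ (r.left i))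
    (fun i => ℛ ℂ (r.right i))
  have key7 := congrArg Ω key6
  simp only [map_sum, hΩ, Omega_eval] at key7
  calc S (S (a ⊗ₜ[ℂ] (q ⊗ₜ[ℂ] b)))
      = ∑ i ∈ r.index, ∑ j ∈ (ℛ ℂ (r.right i)).index,
          S (act (𝒯 ((ℛ ℂ (r.right i)).right j)) b ⊗ₜ[ℂ]
            (𝒯 ((ℛ ℂ (r.right i)).left j) ⊗ₜ[ℂ] act (𝒯 (r.left i)) a)) := by
        rw [hS a q b, cmAntipodeRHS_repr act a b r]
        simp only [map_sum]
    _ = ∑ i ∈ r.index, ∑ j ∈ (ℛ ℂ (r.right i)).index,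
          ∑ k ∈ (ℛ ℂ ((ℛ ℂ (r.right i)).left j)).index,
          ∑ m ∈ (ℛ ℂ ((ℛ ℂ ((ℛ ℂ (r.right i)).left j)).left k)).index,
          act ((ℛ ℂ ((ℛ ℂ ((ℛ ℂ (r.right i)).left j)).left k)).left m)
              (act (𝒯 (r.left i)) a) ⊗ₜ[ℂ]
            ((ℛ ℂ ((ℛ ℂ ((ℛ ℂ (r.right i)).left j)).left k)).right m ⊗ₜ[ℂ]
              act ((ℛ ℂ ((ℛ ℂ (r.right i)).left j)).right k)
                (act (𝒯 ((ℛ ℂ (r.right i)).right j)) b)) := by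
        refine Finset.sum_congr rfl fun i _ => Finset.sum_congr rfl fun j _ => ?_
        rw [hS, cmAntipodeRHS_antipode hT act _ _ _ (ℛ ℂ ((ℛ ℂ (r.right i)).left j))]
    _ = ∑ i ∈ r.index, ∑ j ∈ (ℛ ℂ (r.right i)).index,
          ∑ k ∈ (ℛ ℂ ((ℛ ℂ (r.right i)).left j)).index,
          ∑ m ∈ (ℛ ℂ ((ℛ ℂ ((ℛ ℂ (r.right i)).left j)).left k)).index,
          act ((ℛ ℂ ((ℛ ℂ ((ℛ ℂ (r.right i)).left j)).left k)).left m * 𝒯 (r.left i)) a ⊗ₜ[ℂ]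
            ((ℛ ℂ ((ℛ ℂ ((ℛ ℂ (r.right i)).left j)).left k)).right m ⊗ₜ[ℂ]
              act ((ℛ ℂ ((ℛ ℂ (r.right i)).left j)).right k * 𝒯 ((ℛ ℂ (r.right i)).right j)) b) := by
        simp only [← hact_mul]
    _ = ∑ i ∈ r.index, ∑ n ∈ (ℛ ℂ (r.right i)).index,
          act ((ℛ ℂ (r.right i)).left n * 𝒯 (r.left i)) a ⊗ₜ[ℂ]
            ((ℛ ℂ (r.right i)).right n ⊗ₜ[ℂ] b) := Finset.sum_congr rfl step5
    _ = ∑ i ∈ r.index, ∑ k ∈ (ℛ ℂ (r.left i)).index,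
          act ((ℛ ℂ (r.left i)).right k * 𝒯 ((ℛ ℂ (r.left i)).left k)) a ⊗ₜ[ℂ]
            (r.right i ⊗ₜ[ℂ] b) := key7.symm
    _ = ∑ i ∈ r.index, 𝜀 (r.left i) • (a ⊗ₜ[ℂ] (r.right i ⊗ₜ[ℂ] b)) := by
        refine Finset.sum_congr rfl fun i _ => ?_
        rw [← TensorProduct.sum_tmul, ← LinearMap.sum_apply, ← map_sum,
          sum_right_mul_antipode_left hT (ℛ ℂ (r.left i)), Algebra.algebraMap_eq_smul_one,
          map_smul, LinearMap.smul_apply, hact_one, TensorProduct.smul_tmul']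
    _ = a ⊗ₜ[ℂ] (q ⊗ₜ[ℂ] b) := by
        have hΛ : ∀ w : Q, a ⊗ₜ[ℂ] (w ⊗ₜ[ℂ] b)
            = ((TensorProduct.mk ℂ A (Q ⊗[ℂ] A) a) ∘ₗ ((TensorProduct.mk ℂ Q A).flip b)) w := by
          intro w; simp
        simp only [hΛ, ← map_smul, ← map_sum]
        rw [sum_counit_smul_right r]

end CM


/-- The antipode `S` of the Connes–Moscovici Hopf algebroid is an involution:
`S ∘ S = id` on `H = A ⊗ Q ⊗ A`; in particular `S` is bijective. -/
theorem cm_antipode_involutive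
    {Q A : Type*} [Ring Q] [HopfAlgebra ℂ Q] [Ring A] [Algebra ℂ A]
    (act : Q →ₗ[ℂ] A →ₗ[ℂ] A)
    (hact_one : ∀ a : A, act 1 a = a)
    (hact_mul : ∀ (q q' : Q) (a : A), act (q * q') a = act q (act q' a))
    (hact_alg_mul : ∀ (q : Q) (a a' : A),
      act q (a * a') =
        LinearMap.mul' ℂ A
          (TensorProduct.map (act.flip a) (act.flip a') (Coalgebra.comul (R := ℂ) q)))
    (hact_alg_one : ∀ q : Q, act q 1 = Coalgebra.counit (R := ℂ) q • (1 : A))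
    (hT : ∀ q : Q, HopfAlgebra.antipode (R := ℂ) (HopfAlgebra.antipode (R := ℂ) q) = q)
    -- the antipode of `H`:
    (S : (A ⊗[ℂ] (Q ⊗[ℂ] A)) →ₗ[ℂ] (A ⊗[ℂ] (Q ⊗[ℂ] A)))
    (hS : ∀ (a : A) (q : Q) (b : A),
      S (a ⊗ₜ[ℂ] (q ⊗ₜ[ℂ] b)) = cmAntipodeRHS act a q b) :
    (∀ x : A ⊗[ℂ] (Q ⊗[ℂ] A), S (S x) = x) ∧ Function.Bijective S := by
  have main : ∀ (a : A) (q : Q) (b : A), S (S (a ⊗ₜ[ℂ] (q ⊗ₜ[ℂ] b))) = a ⊗ₜ[ℂ] (q ⊗ₜ[ℂ] b) :=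
    SS_pure act hact_one hact_mul hT S hS
  have hinv : ∀ x : A ⊗[ℂ] (Q ⊗[ℂ] A), S (S x) = x := by
    intro x
    induction x using TensorProduct.induction_on with
    | zero => simp
    | tmul a y =>
      induction y using TensorProduct.induction_on with
      | zero => simp [TensorProduct.tmul_zero]
      | tmul q b => exact main a q b
      | add y₁ y₂ h₁ h₂ => rw [TensorProduct.tmul_add, map_add, map_add, h₁, h₂]
    | add x y hx hy => rw [map_add, map_add, hx, hy]
  exact ⟨hinv, Function.Involutive.bijective hinv⟩
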